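/- Let q̄ ≥ 2 be a real number, let e, a ∈ ℝ^n, and let c ≥ 0. Then q̄ |e|^{q̄−2} ( ⟨e, a⟩ + ((q̄ − 1)/2) c² ) ≤ (q̄ (q̄ − 1)/2) |e|^{q̄} + q̄ · max(|a|^{q̄}, c^{q̄}), where ⟨·,·⟩ is the Euclidean inner product on ℝ^n and |e|^{q̄−2} is interpreted as 1 when e = 0 and q̄ = 2. -/

import Mathlib

open scoped RealInnerProductSpace

/-- Let `q̄ ≥ 2`, `e, a ∈ ℝ^n`, `c ≥ 0`.  Then
`q̄ |e|^{q̄-2} (⟨e,a⟩ + ((q̄-1)/2) c²) ≤ (q̄(q̄-1)/2) |e|^{q̄} + q̄ max(|a|^{q̄}, c^{q̄})`,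
where powers are real powers (so `|e|^{q̄-2} = 1` when `e = 0` and `q̄ = 2`,
by the convention `0^0 = 1` of `Real.rpow`). -/
theorem stmt_16 (n : ℕ) (qbar : ℝ) (hqbar : 2 ≤ qbar)
    (e a : EuclideanSpace ℝ (Fin n)) (c : ℝ) (hc : 0 ≤ c) :
    qbar * ‖e‖ ^ (qbar - 2) * (⟪e, a⟫ + ((qbar - 1) / 2) * c ^ 2) ≤
      (qbar * (qbar - 1) / 2) * ‖e‖ ^ qbar + qbar * max (‖a‖ ^ qbar) (c ^ qbar) := by
  set r := ‖e‖ with hr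
  have hr0 : 0 ≤ r := norm_nonneg e
  have hA0 : 0 ≤ ‖a‖ := norm_nonneg a
  have hq0 : (0:ℝ) < qbar := by linarith
  have hq1 : (0:ℝ) ≤ qbar - 1 := by linarith
  have hq2 : (0:ℝ) ≤ qbar - 2 := by linarith
  have hw : (qbar - 1)/qbar + 1/qbar = 1 := by field_simp; ring
  have hw' : (qbar - 2)/qbar + 2/qbar = 1 := by field_simp; ring
  have hrq : 0 ≤ r ^ qbar := Real.rpow_nonneg hr0 _
  have hAq : 0 ≤ ‖a‖ ^ qbar := Real.rpow_nonneg hA0 _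
  have hcq : 0 ≤ c ^ qbar := Real.rpow_nonneg hc _
  have key1 : r ^ (qbar - 1) * ‖a‖ ≤ (qbar-1)/qbar * r ^ qbar + 1/qbar * ‖a‖ ^ qbar := by
    have h := Real.geom_mean_le_arith_mean2_weighted
      (div_nonneg hq1 hq0.le) (div_nonneg zero_le_one hq0.le) hrq hAq hw
    have e1 : (r ^ qbar) ^ ((qbar-1)/qbar) = r ^ (qbar - 1) := by
      rw [← Real.rpow_mul hr0]; congr 1; field_simp
    have e2 : (‖a‖ ^ qbar) ^ ((1:ℝ)/qbar) = ‖a‖ := by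
      rw [← Real.rpow_mul hA0, mul_one_div, div_self hq0.ne', Real.rpow_one]
    rwa [e1, e2] at h
  have key2 : r ^ (qbar - 2) * c ^ 2 ≤ (qbar-2)/qbar * r ^ qbar + 2/qbar * c ^ qbar := by
    have h := Real.geom_mean_le_arith_mean2_weighted
      (div_nonneg hq2 hq0.le) (div_nonneg (by norm_num) hq0.le) hrq hcq hw'
    have e1 : (r ^ qbar) ^ ((qbar-2)/qbar) = r ^ (qbar - 2) := by
      rw [← Real.rpow_mul hr0]; congr 1; field_simp
    have e2 : (c ^ qbar) ^ ((2:ℝ)/qbar) = c ^ 2 := by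
      rw [← Real.rpow_mul hc]
      have h2 : qbar * (2/qbar) = 2 := by field_simp
      rw [h2, show ((2:ℝ)) = ((2:ℕ):ℝ) by norm_num, Real.rpow_natCast]
    rwa [e1, e2] at h
  have hinner : ⟪e, a⟫ ≤ r * ‖a‖ := real_inner_le_norm e a
  have hrpow2 : 0 ≤ r ^ (qbar - 2) := Real.rpow_nonneg hr0 _
  have hne : qbar - 2 + 1 ≠ 0 := by
    have : (0:ℝ) < qbar - 2 + 1 := by linarith
    exact this.ne'
  have hstep : r ^ (qbar - 2) * r = r ^ (qbar - 1) := by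
    rw [show qbar - 1 = qbar - 2 + 1 by ring, Real.rpow_add' hr0 hne, Real.rpow_one]
  have hM1 : ‖a‖ ^ qbar ≤ max (‖a‖ ^ qbar) (c ^ qbar) := le_max_left _ _
  have hM2 : c ^ qbar ≤ max (‖a‖ ^ qbar) (c ^ qbar) := le_max_right _ _
  have hc2 : 0 ≤ c ^ 2 := sq_nonneg c
  calc qbar * r ^ (qbar - 2) * (⟪e, a⟫ + ((qbar - 1) / 2) * c ^ 2)
      ≤ qbar * r ^ (qbar - 2) * (r * ‖a‖ + ((qbar - 1) / 2) * c ^ 2) := by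
        apply mul_le_mul_of_nonneg_left _ (by positivity)
        linarith
    _ = qbar * (r ^ (qbar - 1) * ‖a‖) + (qbar * (qbar - 1) / 2) * (r ^ (qbar - 2) * c ^ 2) := by
        rw [← hstep]; ring
    _ ≤ qbar * ((qbar-1)/qbar * r ^ qbar + 1/qbar * ‖a‖ ^ qbar)
          + (qbar * (qbar - 1) / 2) * ((qbar-2)/qbar * r ^ qbar + 2/qbar * c ^ qbar) := by
        have h1 := mul_le_mul_of_nonneg_left key1 hq0.le
        have h2 := mul_le_mul_of_nonneg_left key2 (by positivity : (0:ℝ) ≤ qbar * (qbar - 1) / 2)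
        linarith
    _ = (qbar * (qbar - 1) / 2) * r ^ qbar + ‖a‖ ^ qbar + (qbar - 1) * c ^ qbar := by
        field_simp; ring
    _ ≤ (qbar * (qbar - 1) / 2) * r ^ qbar + max (‖a‖ ^ qbar) (c ^ qbar)
          + (qbar - 1) * max (‖a‖ ^ qbar) (c ^ qbar) := by
        have := mul_le_mul_of_nonneg_left hM2 hq1
        linarith
    _ = (qbar * (qbar - 1) / 2) * r ^ qbar + qbar * max (‖a‖ ^ qbar) (c ^ qbar) := by ring
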